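/- The map ρ₁^β : ℙ₁ → (ℙ₁)^β↾(κ+1) is a projection of forcing posets: it is order-preserving and surjective, maps the empty condition to the empty condition, and for every p ∈ ℙ₁ and every q ∈ (ℙ₁)^β↾(κ+1) with q ≤ ρ₁^β(p), there exists p′ ∈ ℙ₁ with p′ ≤₁ p and ρ₁^β(p′) ≤ q. -/

import Mathlib

noncomputable section

open Classical

/-- Ordinals (in the base universe). -/
abbrev Ord0 : Type 1 := Ordinal.{0}
/-- Cardinals (in the base universe). -/
abbrev Card0 : Type 1 := Cardinal.{0}

/-- Vertices of trees: pairs (κ, i) of a cardinal (the level) and an ordinal (the index). -/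
abbrev Vertex : Type 1 := Card0 × Ord0

/-- κ is a successor cardinal. -/
def IsSuccCard (κ : Card0) : Prop := ∃ μ : Card0, Cardinal.aleph0 ≤ μ ∧ κ = Order.succ μ

/-- κ is an (infinite) limit cardinal. -/
def IsLimitCard (κ : Card0) : Prop := Cardinal.aleph0 ≤ κ ∧ ¬ IsSuccCard κ

/-- The modified function F_lim. -/
def FlimOf (F : Card0 → Card0) (κ : Card0) : Card0 :=
  if κ < Cardinal.aleph Ordinal.omega0 then F Cardinal.aleph0
  else if IsLimitCard κ then F κ
  else F (sSup {lam : Card0 | lam < κ ∧ IsLimitCard lam})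

/-- A set (of objects living in `Type 1`) has cardinality < κ. -/
def SetCardLT {α : Type 1} (S : Set α) (κ : Card0) : Prop :=
  Cardinal.mk ↥S < Cardinal.lift.{1} κ

/-- Raw data for conditions in ℙ₀: a set of vertices, a binary relation on vertices and
a valuation assigning to each vertex a partial 0-1-function on ordinals. -/
structure RawP0 : Type 1 where
  verts : Set Vertex
  le : Vertex → Vertex → Prop
  val : Vertex → Ord0 → Option Bool

/-- Domain of the partial function attached to vertex v. -/
def dom0 (p : RawP0) (v : Vertex) : Set Ord0 := {ζ | p.val v ζ ≠ none}

/-- (t, le) is an F_lim-tree. -/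
def IsFlimTree (Flim : Card0 → Card0) (t : Set Vertex) (le : Vertex → Vertex → Prop) : Prop :=
  (∀ v ∈ t, (v.1 = 0 ∧ v.2 = 0) ∨ (Cardinal.aleph0 ≤ v.1 ∧ v.2 < (Flim v.1).ord)) ∧
  (∀ a b, le a b → a ∈ t ∧ b ∈ t) ∧
  (∀ v ∈ t, le v v) ∧
  (∀ a b c, le a b → le b c → le a c) ∧
  (∀ a b, le a b → le b a → a = b) ∧
  (∀ a b, le a b → a.1 ≤ b.1) ∧
  (∀ b ∈ t, ∀ κ : Card0, (κ = 0 ∨ Cardinal.aleph0 ≤ κ) → κ < b.1 →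
      ∃! i : Ord0, (κ, i) ∈ t ∧ le (κ, i) b) ∧
  (∃ M : Finset Vertex, ↑M ⊆ t ∧ ∀ v ∈ t, ∃ m ∈ M, le v m) ∧
  (∀ κ : Card0, IsLimitCard κ → Cardinal.aleph0 < κ → ∀ i i' : Ord0,
      (κ, i) ∈ t → (κ, i') ∈ t →
      ({w | le w (κ, i) ∧ w ≠ (κ, i)} = {w | le w (κ, i') ∧ w ≠ (κ, i')}) → i = i')

/-- p is a condition of the forcing ℙ₀. -/
def IsP0 (F : Card0 → Card0) (p : RawP0) : Prop :=
  IsFlimTree (FlimOf F) p.verts p.le ∧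
  (∀ v, v ∉ p.verts → ∀ ζ, p.val v ζ = none) ∧
  (∀ v ∈ p.verts, ∀ μ : Card0, Cardinal.aleph0 ≤ μ → v.1 = Order.succ μ →
      (∀ ζ ∈ dom0 p v, μ.ord ≤ ζ ∧ ζ < v.1.ord) ∧ SetCardLT (dom0 p v) v.1) ∧
  (∀ v ∈ p.verts, v.1 = Cardinal.aleph0 →
      (∀ ζ ∈ dom0 p v, ζ < Cardinal.aleph0.ord) ∧ (dom0 p v).Finite) ∧
  (∀ v ∈ p.verts, (v.1 = 0 ∨ (IsLimitCard v.1 ∧ Cardinal.aleph0 < v.1)) →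
      ∀ ζ, p.val v ζ = none) ∧
  (∀ v ∈ p.verts, IsLimitCard v.1 → (v.1).IsRegular →
      SetCardLT {ζ : Ord0 | ∃ w, w ∈ p.verts ∧ IsSuccCard w.1 ∧ p.le w v ∧ ζ ∈ dom0 p w} v.1)

/-- t(q) extends t(p) as an F_lim-tree. -/
def treeLe (q p : RawP0) : Prop :=
  p.verts ⊆ q.verts ∧ ∀ a b, p.le a b → q.le a b

/-- The partial order ≤₀ on conditions of ℙ₀. -/
def le0 (q p : RawP0) : Prop :=
  treeLe q p ∧ ∀ v ∈ p.verts, ∀ ζ b, p.val v ζ = some b → q.val v ζ = some b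

/-- The class of conditions of ℙ₀. -/
def P0set (F : Card0 → Card0) : Set RawP0 := {p | IsP0 F p}

/-- Compatibility with common extension in a given subclass S. -/
def Compat0In (S : Set RawP0) (p q : RawP0) : Prop := ∃ r ∈ S, le0 r p ∧ le0 r q

/-- Compatibility in ℙ₀. -/
def Compat0 (F : Card0 → Card0) (p q : RawP0) : Prop := Compat0In (P0set F) p q

/-- The height of p is at most lam. -/
def heightLE (p : RawP0) (lam : Card0) : Prop := ∀ v ∈ p.verts, v.1 ≤ lam

/-- Raw data for conditions in ℙ₁: for each (successor) cardinal a partial 0-1-function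
on pairs (ζ, i). -/
abbrev P1Raw : Type 1 := Card0 → Ord0 × Ord0 → Option Bool

/-- Domain of the column at κ. -/
def dom1 (p : P1Raw) (κ : Card0) : Set (Ord0 × Ord0) := {x | p κ x ≠ none}

/-- Support of a condition of ℙ₁. -/
def supp1 (p : P1Raw) : Set Card0 := {κ | ∃ x, p κ x ≠ none}

/-- Succ′: successor cardinals κ⁺ with F(κ⁺) > F(ν⁺) for all successor cardinals ν⁺ < κ⁺. -/
def SuccPrime (F : Card0 → Card0) (κ : Card0) : Prop :=
  IsSuccCard κ ∧ ∀ ν, IsSuccCard ν → ν < κ → F ν < F κ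

/-- p is a condition of the forcing ℙ₁. -/
def IsP1 (F : Card0 → Card0) (p : P1Raw) : Prop :=
  (supp1 p).Finite ∧
  (∀ κ ∈ supp1 p, SuccPrime F κ) ∧
  (∀ κ ∈ supp1 p, ∀ μ : Card0, Cardinal.aleph0 ≤ μ → κ = Order.succ μ →
    (∀ x ∈ dom1 p κ, μ.ord ≤ x.1 ∧ x.1 < κ.ord ∧ x.2 < (F κ).ord) ∧
    SetCardLT (dom1 p κ) κ ∧
    (∀ x y, x ∈ dom1 p κ → y ∈ dom1 p κ → (x.1, y.2) ∈ dom1 p κ))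

/-- The partial order ≤₁ on conditions of ℙ₁ (reverse inclusion). -/
def le1 (q p : P1Raw) : Prop := ∀ κ x b, p κ x = some b → q κ x = some b

/-- The class of conditions of ℙ₁. -/
def P1set (F : Card0 → Card0) : Set P1Raw := {p | IsP1 F p}

/-- Compatibility with common extension in a given subclass S. -/
def Compat1In (S : Set P1Raw) (p q : P1Raw) : Prop := ∃ r ∈ S, le1 r p ∧ le1 r q

/-- Compatibility in ℙ₁. -/
def Compat1 (F : Card0 → Card0) (p q : P1Raw) : Prop := Compat1In (P1set F) p q

/-- The restriction p↾{(κ̄₀,ī₀),…}: keep, in each column κ̄_l, only the entries with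
second coordinate ī_l. -/
def restr1 (S : Set (Card0 × Ord0)) (p : P1Raw) : P1Raw :=
  fun κ x => if (κ, x.2) ∈ S then p κ x else none

/-- p is a condition of the forcing (ℙ₁)^β↾(κ+1): finite support made of cardinals in
Succ′ below κ, with columns p(λ⁺) ∈ Fn([λ,λ⁺) × min{β,F(λ⁺)}, 2, λ⁺) with rectangular
domain. -/
def IsP1beta (F : Card0 → Card0) (κ : Card0) (β : Ord0) (p : P1Raw) : Prop :=
  (supp1 p).Finite ∧
  (∀ κ' ∈ supp1 p, SuccPrime F κ' ∧ κ' < κ) ∧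
  (∀ κ' ∈ supp1 p, ∀ μ : Card0, Cardinal.aleph0 ≤ μ → κ' = Order.succ μ →
    (∀ x ∈ dom1 p κ', μ.ord ≤ x.1 ∧ x.1 < κ'.ord ∧ x.2 < (F κ').ord ∧ x.2 < β) ∧
    SetCardLT (dom1 p κ') κ' ∧
    (∀ x y, x ∈ dom1 p κ' → y ∈ dom1 p κ' → (x.1, y.2) ∈ dom1 p κ'))

/-- The projection ρ₁^β : ℙ₁ → (ℙ₁)^β↾(κ+1): keep only the columns below κ and, in
each column, the entries with second coordinate < β. -/
def rho1 (κ : Card0) (β : Ord0) (p : P1Raw) : P1Raw :=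
  fun κ' x => if κ' < κ ∧ x.2 < β then p κ' x else none

lemma setCardLT_mono {α : Type 1} {S T : Set α} (h : S ⊆ T) {κ : Card0}
    (hT : SetCardLT T κ) : SetCardLT S κ :=
  lt_of_le_of_lt (Cardinal.mk_le_mk_of_subset h) hT

lemma succPrime_aleph0_le {F : Card0 → Card0} {κ : Card0} (h : SuccPrime F κ) :
    Cardinal.aleph0 ≤ κ := by
  obtain ⟨⟨μ, hμ, rfl⟩, -⟩ := h
  exact hμ.trans (le_of_lt (Order.lt_succ μ))

lemma setCardLT_union {α : Type 1} {S T : Set α} {κ : Card0} (hκ : Cardinal.aleph0 ≤ κ)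
    (hS : SetCardLT S κ) (hT : SetCardLT T κ) : SetCardLT (S ∪ T) κ := by
  refine lt_of_le_of_lt (Cardinal.mk_union_le S T) ?_
  exact Cardinal.add_lt_of_lt (Cardinal.aleph0_le_lift.2 hκ) hS hT

lemma setCardLT_proj1 {S : Set (Ord0 × Ord0)} {κ : Card0} (hS : SetCardLT S κ) :
    SetCardLT {ζ : Ord0 | ∃ η, (ζ, η) ∈ S} κ := by
  refine lt_of_le_of_lt ?_ hS
  have hinj : Function.Injective (fun z : {ζ : Ord0 // ∃ η, (ζ, η) ∈ S} =>
      (⟨(z.1, Classical.choose z.2), Classical.choose_spec z.2⟩ : S)) := by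
    intro a b hab
    apply Subtype.ext
    exact congrArg (fun w : S => w.1.1) hab
  exact Cardinal.mk_le_of_injective hinj

lemma setCardLT_proj2 {S : Set (Ord0 × Ord0)} {κ : Card0} (hS : SetCardLT S κ) :
    SetCardLT {η : Ord0 | ∃ ζ, (ζ, η) ∈ S} κ := by
  refine lt_of_le_of_lt ?_ hS
  have hinj : Function.Injective (fun z : {η : Ord0 // ∃ ζ, (ζ, η) ∈ S} =>
      (⟨(Classical.choose z.2, z.1), Classical.choose_spec z.2⟩ : S)) := by
    intro a b hab
    apply Subtype.ext
    exact congrArg (fun w : S => w.1.2) hab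
  exact Cardinal.mk_le_of_injective hinj

lemma setCardLT_rect {X Y : Set Ord0} {κ : Card0} (hκ : Cardinal.aleph0 ≤ κ)
    (hX : SetCardLT X κ) (hY : SetCardLT Y κ) :
    SetCardLT {x : Ord0 × Ord0 | x.1 ∈ X ∧ x.2 ∈ Y} κ := by
  have hle : Cardinal.mk ↥{x : Ord0 × Ord0 | x.1 ∈ X ∧ x.2 ∈ Y} ≤
      Cardinal.mk ↥X * Cardinal.mk ↥Y := by
    have hinj : Function.Injective (fun z : {x : Ord0 × Ord0 // x.1 ∈ X ∧ x.2 ∈ Y} =>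
        ((⟨z.1.1, z.2.1⟩, ⟨z.1.2, z.2.2⟩) : X × Y)) := by
      intro a b hab
      apply Subtype.ext
      have h1 := congrArg (fun w : ↥X × ↥Y => (w.1.1 : Ord0)) hab
      have h2 := congrArg (fun w : ↥X × ↥Y => (w.2.1 : Ord0)) hab
      exact Prod.ext h1 h2
    calc Cardinal.mk ↥{x : Ord0 × Ord0 | x.1 ∈ X ∧ x.2 ∈ Y}
        ≤ Cardinal.mk (↥X × ↥Y) := Cardinal.mk_le_of_injective hinj
      _ = Cardinal.mk ↥X * Cardinal.mk ↥Y := by rw [Cardinal.mk_prod]; simp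
  exact lt_of_le_of_lt hle
    (Cardinal.mul_lt_of_lt (Cardinal.aleph0_le_lift.2 hκ) hX hY)

/-- Common extension of p and (compatible) q, with columns filled to rectangles. -/
def extFill (p q : P1Raw) : P1Raw := fun κ' x =>
  match q κ' x with
  | some b => some b
  | none => match p κ' x with
    | some b => some b
    | none =>
      if (∃ η, (x.1, η) ∈ dom1 p κ' ∪ dom1 q κ') ∧
         (∃ ζ, (ζ, x.2) ∈ dom1 p κ' ∪ dom1 q κ')
      then some false else none

lemma mem_dom_extFill (p q : P1Raw) (κ' : Card0) (x : Ord0 × Ord0) :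
    x ∈ dom1 (extFill p q) κ' ↔
      (∃ η, (x.1, η) ∈ dom1 p κ' ∪ dom1 q κ') ∧
      (∃ ζ, (ζ, x.2) ∈ dom1 p κ' ∪ dom1 q κ') := by
  constructor
  · intro hx
    rcases hq : q κ' x with _ | b
    · rcases hp : p κ' x with _ | b
      · by_contra h
        exact hx (by simp only [extFill, hq, hp, if_neg h])
      · have hxp : x ∈ dom1 p κ' := by simp [dom1, hp]
        exact ⟨⟨x.2, Or.inl (by simpa using hxp)⟩, ⟨x.1, Or.inl (by simpa using hxp)⟩⟩
    · have hxq : x ∈ dom1 q κ' := by simp [dom1, hq]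
      exact ⟨⟨x.2, Or.inr (by simpa using hxq)⟩, ⟨x.1, Or.inr (by simpa using hxq)⟩⟩
  · rintro ⟨h1, h2⟩
    simp only [dom1, Set.mem_setOf_eq, extFill]
    rcases hq : q κ' x with _ | b
    · rcases hp : p κ' x with _ | b
      · simp only [dom1] at h1 h2; simp only [h1, h2, and_self, ↓reduceIte]; simp
      · simp
    · simp

/-- ρ₁^β : ℙ₁ → (ℙ₁)^β↾(κ+1) is a projection of forcing posets:
order-preserving, surjective, maps the empty condition to the empty condition, and
every q ≤ ρ₁^β(p) can be reached from below p. -/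
theorem statement15 (F : Card0 → Card0)
    (hF : ∀ κ, Cardinal.aleph0 ≤ κ → Order.succ (Order.succ κ) ≤ F κ)
    (hFmono : ∀ κ lam, Cardinal.aleph0 ≤ κ → κ ≤ lam → F κ ≤ F lam)
    (κ : Card0) (hκ : IsLimitCard κ) (β : Ord0) :
    -- ρ₁^β maps ℙ₁ into (ℙ₁)^β↾(κ+1)
    (∀ p, IsP1 F p → IsP1beta F κ β (rho1 κ β p)) ∧
    -- order-preserving
    (∀ p q, IsP1 F p → IsP1 F q → le1 q p → le1 (rho1 κ β q) (rho1 κ β p)) ∧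
    -- surjective
    (∀ r, IsP1beta F κ β r → ∃ p, IsP1 F p ∧ rho1 κ β p = r) ∧
    -- empty condition to empty condition
    (rho1 κ β (fun _ _ => none) = (fun _ _ => none)) ∧
    -- projection property
    (∀ p, IsP1 F p → ∀ q, IsP1beta F κ β q → le1 q (rho1 κ β p) →
        ∃ p', IsP1 F p' ∧ le1 p' p ∧ le1 (rho1 κ β p') q) := by
  -- basic facts about rho1
  have hrho_ne : ∀ (p : P1Raw) (κ' : Card0) (x : Ord0 × Ord0),
      rho1 κ β p κ' x ≠ none → κ' < κ ∧ x.2 < β ∧ p κ' x ≠ none := by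
    intro p κ' x hx
    by_cases h : κ' < κ ∧ x.2 < β
    · exact ⟨h.1, h.2, by simpa [rho1, h] using hx⟩
    · exact absurd (by simp [rho1, h]) hx
  refine ⟨?_, ?_, ?_, ?_, ?_⟩
  · -- maps ℙ₁ into (ℙ₁)^β↾(κ+1)
    intro p hp
    obtain ⟨hfin, hsp, hdom⟩ := hp
    have hsub : supp1 (rho1 κ β p) ⊆ supp1 p := by
      rintro κ' ⟨x, hx⟩
      exact ⟨x, (hrho_ne p κ' x hx).2.2⟩
    refine ⟨hfin.subset hsub, ?_, ?_⟩
    · rintro κ' hκ'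
      obtain ⟨x, hx⟩ := hκ'
      exact ⟨hsp κ' (hsub ⟨x, hx⟩), (hrho_ne p κ' x hx).1⟩
    · intro κ' hκ' μ hμ hsucc
      have hκ'p : κ' ∈ supp1 p := hsub hκ'
      obtain ⟨hb, hc, hr⟩ := hdom κ' hκ'p μ hμ hsucc
      have hdsub : dom1 (rho1 κ β p) κ' ⊆ dom1 p κ' := fun x hx => (hrho_ne p κ' x hx).2.2
      refine ⟨?_, setCardLT_mono hdsub hc, ?_⟩
      · intro x hx
        obtain ⟨hκκ, hxβ, hxp⟩ := hrho_ne p κ' x hx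
        obtain ⟨h1, h2, h3⟩ := hb x hxp
        exact ⟨h1, h2, h3, hxβ⟩
      · intro x y hx hy
        obtain ⟨hκκ, hxβ, hxp⟩ := hrho_ne p κ' x hx
        obtain ⟨-, hyβ, hyp⟩ := hrho_ne p κ' y hy
        have : (x.1, y.2) ∈ dom1 p κ' := hr x y hxp hyp
        simp only [dom1, Set.mem_setOf_eq, rho1] at this ⊢
        rw [if_pos ⟨hκκ, hyβ⟩]
        exact this
  · -- order-preserving
    intro p q _ _ hle κ' x b hx
    by_cases h : κ' < κ ∧ x.2 < β
    · simp only [rho1, if_pos h] at hx ⊢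
      exact hle κ' x b hx
    · simp [rho1, h] at hx
  · -- surjective
    intro r hr
    obtain ⟨hfin, hsp, hdom⟩ := hr
    refine ⟨r, ⟨hfin, fun κ' h => (hsp κ' h).1, ?_⟩, ?_⟩
    · intro κ' hκ' μ hμ hsucc
      obtain ⟨hb, hc, hrect⟩ := hdom κ' hκ' μ hμ hsucc
      exact ⟨fun x hx => ⟨(hb x hx).1, (hb x hx).2.1, (hb x hx).2.2.1⟩, hc, hrect⟩
    · funext κ' x
      by_cases h : κ' < κ ∧ x.2 < β
      · simp [rho1, h]
      · simp only [rho1, if_neg h]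
        by_contra hne
        have hxr : x ∈ dom1 r κ' := fun hc => hne hc.symm
        have hκ'r : κ' ∈ supp1 r := ⟨x, hxr⟩
        obtain ⟨μ, hμ, hsucc⟩ := (hsp κ' hκ'r).1.1
        have := (hdom κ' hκ'r μ hμ hsucc).1 x hxr
        exact h ⟨(hsp κ' hκ'r).2, this.2.2.2⟩
  · -- empty to empty
    funext κ' x
    simp [rho1]
  · -- projection property
    intro p hp q hq hqle
    have hcompat : ∀ κ' x b b', p κ' x = some b → q κ' x = some b' → b = b' := by
      intro κ' x b b' hpx hqx
      have hκ'q : κ' ∈ supp1 q := ⟨x, by rw [hqx]; simp⟩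
      obtain ⟨hsp, hκ'κ⟩ := hq.2.1 κ' hκ'q
      obtain ⟨μ, hμ, hsucc⟩ := hsp.1
      have hxβ : x.2 < β :=
        ((hq.2.2 κ' hκ'q μ hμ hsucc).1 x (by simp [dom1, hqx])).2.2.2
      have hrp : rho1 κ β p κ' x = some b := by simp [rho1, hκ'κ, hxβ, hpx]
      have := hqle κ' x b hrp
      rw [hqx] at this
      exact (Option.some.inj this).symm
    refine ⟨extFill p q, ?_, ?_, ?_⟩
    · -- IsP1 F (extFill p q)
      have hsupp_sub : supp1 (extFill p q) ⊆ supp1 p ∪ supp1 q := by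
        rintro κ' ⟨x, hx⟩
        rcases ((mem_dom_extFill p q κ' x).1 hx).1 with ⟨η, hη | hη⟩
        · exact Or.inl ⟨(x.1, η), hη⟩
        · exact Or.inr ⟨(x.1, η), hη⟩
      refine ⟨(hp.1.union hq.1).subset hsupp_sub, ?_, ?_⟩
      · intro κ' hκ'
        rcases hsupp_sub hκ' with h | h
        · exact hp.2.1 κ' h
        · exact (hq.2.1 κ' h).1
      · intro κ' hκ' μ hμ hsucc
        have hκ'ℵ : Cardinal.aleph0 ≤ κ' := by
          rw [hsucc]; exact hμ.trans (le_of_lt (Order.lt_succ μ))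
        have hPbound : ∀ x ∈ dom1 p κ', μ.ord ≤ x.1 ∧ x.1 < κ'.ord ∧ x.2 < (F κ').ord := by
          intro x hx
          exact (hp.2.2 κ' ⟨x, hx⟩ μ hμ hsucc).1 x hx
        have hQbound : ∀ x ∈ dom1 q κ', μ.ord ≤ x.1 ∧ x.1 < κ'.ord ∧ x.2 < (F κ').ord := by
          intro x hx
          have := (hq.2.2 κ' ⟨x, hx⟩ μ hμ hsucc).1 x hx
          exact ⟨this.1, this.2.1, this.2.2.1⟩
        have hDbound : ∀ x ∈ dom1 p κ' ∪ dom1 q κ',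
            μ.ord ≤ x.1 ∧ x.1 < κ'.ord ∧ x.2 < (F κ').ord := by
          rintro x (hx | hx)
          · exact hPbound x hx
          · exact hQbound x hx
        have hPcard : SetCardLT (dom1 p κ') κ' := by
          by_cases h : κ' ∈ supp1 p
          · exact (hp.2.2 κ' h μ hμ hsucc).2.1
          · have he : dom1 p κ' = ∅ := by
              ext x
              simp only [dom1, Set.mem_setOf_eq, Set.mem_empty_iff_false, iff_false, not_not]
              by_contra hc
              exact h ⟨x, hc⟩
            rw [he]
            unfold SetCardLT
            simp only [Cardinal.mk_emptyCollection]
            exact lt_of_lt_of_le Cardinal.aleph0_pos (Cardinal.aleph0_le_lift.2 hκ'ℵ)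
        have hQcard : SetCardLT (dom1 q κ') κ' := by
          by_cases h : κ' ∈ supp1 q
          · exact (hq.2.2 κ' h μ hμ hsucc).2.1
          · have he : dom1 q κ' = ∅ := by
              ext x
              simp only [dom1, Set.mem_setOf_eq, Set.mem_empty_iff_false, iff_false, not_not]
              by_contra hc
              exact h ⟨x, hc⟩
            rw [he]
            unfold SetCardLT
            simp only [Cardinal.mk_emptyCollection]
            exact lt_of_lt_of_le Cardinal.aleph0_pos (Cardinal.aleph0_le_lift.2 hκ'ℵ)
        have hDcard : SetCardLT (dom1 p κ' ∪ dom1 q κ') κ' :=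
          setCardLT_union hκ'ℵ hPcard hQcard
        refine ⟨?_, ?_, ?_⟩
        · intro x hx
          obtain ⟨⟨η, hη⟩, ⟨ζ, hζ⟩⟩ := (mem_dom_extFill p q κ' x).1 hx
          have h1 := hDbound _ hη
          have h2 := hDbound _ hζ
          exact ⟨h1.1, h1.2.1, h2.2.2⟩
        · have heq : dom1 (extFill p q) κ' =
              {x : Ord0 × Ord0 | x.1 ∈ {ζ : Ord0 | ∃ η, (ζ, η) ∈ dom1 p κ' ∪ dom1 q κ'} ∧
                x.2 ∈ {η : Ord0 | ∃ ζ, (ζ, η) ∈ dom1 p κ' ∪ dom1 q κ'}} := by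
            ext x
            exact mem_dom_extFill p q κ' x
          rw [heq]
          exact setCardLT_rect hκ'ℵ (setCardLT_proj1 hDcard) (setCardLT_proj2 hDcard)
        · intro x y hx hy
          obtain ⟨hx1, -⟩ := (mem_dom_extFill p q κ' x).1 hx
          obtain ⟨-, hy2⟩ := (mem_dom_extFill p q κ' y).1 hy
          exact (mem_dom_extFill p q κ' (x.1, y.2)).2 ⟨hx1, hy2⟩
    · -- le1 (extFill p q) p
      intro κ' x b hpx
      rcases hqx : q κ' x with _ | b'
      · simp [extFill, hqx, hpx]
      · have hbe : b = b' := hcompat κ' x b b' hpx hqx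
        subst hbe
        simp [extFill, hqx]
    · -- le1 (rho1 κ β (extFill p q)) q
      intro κ' x b hqx
      have hκ'q : κ' ∈ supp1 q := ⟨x, by rw [hqx]; simp⟩
      obtain ⟨hsp, hκ'κ⟩ := hq.2.1 κ' hκ'q
      obtain ⟨μ, hμ, hsucc⟩ := hsp.1
      have hxβ : x.2 < β :=
        ((hq.2.2 κ' hκ'q μ hμ hsucc).1 x (by simp [dom1, hqx])).2.2.2
      simp [rho1, hκ'κ, hxβ, extFill, hqx]
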